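/- Let Φ = (φ_n)_n and Ψ = (ψ_n)_n be two frames for H. Then there exist constants ε > 0 and C > 0 (depending only on Φ and Ψ) with the following property: if the difference sequence Φ − Ψ = (φ_n − ψ_n)_n is a Bessel sequence with Bessel bound M_{Φ−Ψ} ≤ ε, then there exists a g-dual frame Ψ^{gd} = (ψ^{gd}_n)_n of Ψ such that T_Ψ U_{Ψ^{gd}} = S_Φ and the sequence Φ − Ψ^{gd} = (φ_n − ψ^{gd}_n)_n is a Bessel sequence with Bessel bound at most C · M_{Φ−Ψ}. -/

import Mathlib

noncomputable section

open ContinuousLinearMap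
open scoped ComplexInnerProductSpace ENNReal

variable {H : Type*} [NormedAddCommGroup H] [InnerProductSpace ℂ H] [CompleteSpace H]

/-- The sequence space `ℓ²(ℕ)`. -/
abbrev Ltwo : Type := lp (fun _ : ℕ => ℂ) 2

/-- `φ` is a Bessel sequence with Bessel bound `M`:
`∑ₙ |⟨f, φₙ⟩|² ≤ M‖f‖²` for every `f`.  (Mathlib inner products are conjugate-linear in the
first slot, so `⟪φ n, f⟫` corresponds to the paper's `⟨f, φₙ⟩`.) -/
def IsBesselBound (φ : ℕ → H) (M : ℝ) : Prop :=
  ∀ f : H, Summable (fun n => ‖(⟪φ n, f⟫ : ℂ)‖ ^ 2) ∧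
    ∑' n, ‖(⟪φ n, f⟫ : ℂ)‖ ^ 2 ≤ M * ‖f‖ ^ 2

/-- `φ` is a frame with lower frame bound `m` and upper (Bessel) bound `M`. -/
def IsFrameWith (φ : ℕ → H) (m M : ℝ) : Prop :=
  0 < m ∧ IsBesselBound φ M ∧
    ∀ f : H, m * ‖f‖ ^ 2 ≤ ∑' n, ‖(⟪φ n, f⟫ : ℂ)‖ ^ 2

/-- `φ` is a frame for `H`. -/
def IsFrame (φ : ℕ → H) : Prop := ∃ m M, IsFrameWith φ m M

/-- `U` is the analysis operator of `φ` : `U f = (⟨f, φₙ⟩)ₙ`.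
The synthesis operator is then `T_φ = adjoint U` and the frame operator is
`S_φ = adjoint U ∘L U`. -/
def IsAnalysisOp (φ : ℕ → H) (U : H →L[ℂ] Ltwo) : Prop :=
  ∀ (f : H) (n : ℕ), U f n = (⟪φ n, f⟫ : ℂ)
open scoped NNReal in
lemma rpow_toReal_two (x : ℝ) : x ^ (2 : ℝ≥0∞).toReal = x ^ 2 := by
  rw [show (2 : ℝ≥0∞).toReal = ((2:ℕ):ℝ) by simp, Real.rpow_natCast]

lemma analysis_sum (φ : ℕ → H) (U : H →L[ℂ] Ltwo) (hU : IsAnalysisOp φ U) (f : H) :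
    Summable (fun n => ‖(⟪φ n, f⟫ : ℂ)‖ ^ 2) ∧
      ∑' n, ‖(⟪φ n, f⟫ : ℂ)‖ ^ 2 = ‖U f‖ ^ 2 := by
  have hsum : Summable (fun n => ‖(U f : ∀ _ : ℕ, ℂ) n‖ ^ (2 : ℝ≥0∞).toReal) :=
    (memℓp_gen_iff (by norm_num)).mp (lp.memℓp (U f))
  have hfun : (fun n => ‖(⟪φ n, f⟫ : ℂ)‖ ^ 2)
      = fun n => ‖(U f : ∀ _ : ℕ, ℂ) n‖ ^ (2 : ℝ≥0∞).toReal := by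
    funext n; rw [rpow_toReal_two, hU f n]
  constructor
  · rw [hfun]; exact hsum
  · rw [hfun, ← lp.norm_rpow_eq_tsum (by norm_num) (U f), rpow_toReal_two]

open scoped NNReal in
lemma frameOp_inv {φ : ℕ → H} {U : H →L[ℂ] Ltwo} (hU : IsAnalysisOp φ U)
    {m M : ℝ} (hf : IsFrameWith φ m M) :
    ∃ e : H ≃L[ℂ] H, (e : H →L[ℂ] H) = adjoint U ∘L U := by
  obtain ⟨hm, hB, hL⟩ := hf
  set S : H →L[ℂ] H := adjoint U ∘L U with hS
  have key : ∀ f : H, m * ‖f‖ ^ 2 ≤ RCLike.re (⟪S f, f⟫ : ℂ) := by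
    intro f
    have h1 : (⟪S f, f⟫ : ℂ) = ⟪U f, U f⟫ := adjoint_inner_left U f (U f)
    rw [h1, inner_self_eq_norm_sq, ← (analysis_sum φ U hU f).2]
    exact hL f
  have lower : ∀ f : H, m * ‖f‖ ≤ ‖S f‖ := by
    intro f
    rcases eq_or_ne f 0 with rfl | hne
    · simp
    · have hf' : 0 < ‖f‖ := norm_pos_iff.mpr hne
      have h2 : m * ‖f‖ ^ 2 ≤ ‖S f‖ * ‖f‖ :=
        le_trans (key f) (le_trans (RCLike.re_le_norm _) (norm_inner_le_norm _ _))
      nlinarith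
  have anti : AntilipschitzWith (⟨m, hm.le⟩ : ℝ≥0)⁻¹ ⇑S := by
    apply S.antilipschitz_of_bound
    intro x
    have hc : (((⟨m, hm.le⟩ : ℝ≥0)⁻¹ : ℝ≥0) : ℝ) = m⁻¹ := NNReal.coe_inv _
    rw [hc, inv_mul_eq_div, le_div_iff₀ hm]
    nlinarith [lower x]
  set R := LinearMap.range (S : H →ₗ[ℂ] H) with hRdef
  have hRclosed : IsClosed (R : Set H) := by
    have : (R : Set H) = Set.range S := by
      ext x; simp [hRdef, LinearMap.mem_range, Set.mem_range]
    rw [this]; exact anti.isClosed_range S.uniformContinuous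
  haveI : CompleteSpace R := hRclosed.completeSpace_coe
  have hR : R = ⊤ := by
    rw [← Submodule.orthogonal_eq_bot_iff]
    rw [Submodule.eq_bot_iff]
    intro x hx
    have h0 : (⟪S x, x⟫ : ℂ) = 0 :=
      (Submodule.mem_orthogonal R x).mp hx (S x) (LinearMap.mem_range_self _ x)
    have h1 : m * ‖x‖ ^ 2 ≤ 0 := by
      have := key x; rw [h0] at this; simpa using this
    have : ‖x‖ = 0 := by
      by_contra hcne
      have hpos : 0 < ‖x‖ := lt_of_le_of_ne (norm_nonneg x) (Ne.symm hcne)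
      have h2 : 0 < m * ‖x‖ ^ 2 := mul_pos hm (pow_pos hpos 2)
      linarith
    exact norm_eq_zero.mp this
  have hker : LinearMap.ker (S : H →ₗ[ℂ] H) = ⊥ :=
    (LinearMap.ker_eq_bot (f := (S : H →ₗ[ℂ] H))).mpr anti.injective
  exact ⟨ContinuousLinearEquiv.ofBijective S hker hR, rfl⟩

set_option maxHeartbeats 1000000 in
/-- Let Φ, Ψ be frames for H.  Then there are constants ε, C > 0 such that
whenever Φ - Ψ is a Bessel sequence with bound `M' ≤ ε`, there is a g-dual frame Ψᵍᵈ of Ψ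
(with analysis operator `V`, `T_Ψ U_{Ψᵍᵈ}` invertible) such that `T_Ψ U_{Ψᵍᵈ} = S_Φ` and
Φ - Ψᵍᵈ is a Bessel sequence with bound `C * M'`. -/
theorem statement10 (φ ψ : ℕ → H) (hφ : IsFrame φ) (hψ : IsFrame ψ)
    (Uφ Uψ : H →L[ℂ] Ltwo) (hUφ : IsAnalysisOp φ Uφ) (hUψ : IsAnalysisOp ψ Uψ) :
    ∃ ε > (0 : ℝ), ∃ C > (0 : ℝ), ∀ M' : ℝ,
      IsBesselBound (fun n => φ n - ψ n) M' → M' ≤ ε →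
      ∃ (ψgd : ℕ → H) (V : H →L[ℂ] Ltwo),
        IsFrame ψgd ∧ IsAnalysisOp ψgd V ∧
        IsUnit (adjoint Uψ ∘L V) ∧
        adjoint Uψ ∘L V = adjoint Uφ ∘L Uφ ∧
        IsBesselBound (fun n => φ n - ψgd n) (C * M') := by
  by_cases htriv : Subsingleton H
  · refine ⟨1, one_pos, 1, one_pos, fun M' hM' _ => ⟨ψ, Uψ, hψ, hUψ, ?_, ?_, ?_⟩⟩
    · exact ⟨⟨adjoint Uψ ∘L Uψ, 1, by ext x; exact Subsingleton.elim _ _,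
        by ext x; exact Subsingleton.elim _ _⟩, rfl⟩
    · ext f; exact Subsingleton.elim _ _
    · intro f
      have hf : f = (0 : H) := Subsingleton.elim f 0
      subst hf
      constructor
      · simp only [inner_zero_right, norm_zero]
        simpa using summable_zero
      · simp
  · haveI : Nontrivial H := not_subsingleton_iff_nontrivial.mp htriv
    obtain ⟨f0, hf0⟩ := exists_ne (0 : H)
    have hf0n : 0 < ‖f0‖ := norm_pos_iff.mpr hf0
    obtain ⟨mφ, Mφ, hφW⟩ := hφ
    obtain ⟨mψ, Mψ, hmψ, hBψ, hLψ⟩ := hψ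
    obtain ⟨eφ, heφ⟩ := frameOp_inv hUφ hφW
    obtain ⟨eψ, heψ⟩ := frameOp_inv hUψ ⟨hmψ, hBψ, hLψ⟩
    obtain ⟨Sφ, hSφdef⟩ : ∃ S : H →L[ℂ] H, S = adjoint Uφ ∘L Uφ := ⟨_, rfl⟩
    obtain ⟨Sψ, hSψdef⟩ : ∃ S : H →L[ℂ] H, S = adjoint Uψ ∘L Uψ := ⟨_, rfl⟩
    obtain ⟨B, hBdef⟩ : ∃ B : H →L[ℂ] H, B = (eψ.symm : H →L[ℂ] H) ∘L Sφ := ⟨_, rfl⟩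
    set K1 : ℝ := ‖(eψ.symm : H →L[ℂ] H)‖ with hK1
    set c : ℝ := 1 + ‖Uψ‖ * (K1 * ((‖adjoint Uψ‖ + ‖Uφ‖))) with hcdef
    have hc1 : 1 ≤ c := by
      have : (0:ℝ) ≤ ‖Uψ‖ * (K1 * ((‖adjoint Uψ‖ + ‖Uφ‖))) := by positivity
      linarith
    have hMψ0 : 0 ≤ Mψ := by
      have h := (hBψ f0).2
      have h0 : (0:ℝ) ≤ ∑' n, ‖(⟪ψ n, f0⟫ : ℂ)‖ ^ 2 := tsum_nonneg (fun n => by positivity)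
      nlinarith [pow_pos hf0n 2]
    have hSφ_eφ : ∀ x, Sφ x = eφ x := fun x => by
      rw [hSφdef]; exact (DFunLike.congr_fun heφ x).symm
    have hSψ_eψ : ∀ x, Sψ x = eψ x := fun x => by
      rw [hSψdef]; exact (DFunLike.congr_fun heψ x).symm
    set eB : H ≃L[ℂ] H := eφ.trans eψ.symm with heBdef
    have hBeq : ∀ x, B x = eB x := by
      intro x
      calc B x = eψ.symm (Sφ x) := by rw [hBdef]; rfl
        _ = eψ.symm (eφ x) := by rw [hSφ_eφ]
        _ = eB x := rfl
    obtain ⟨ψgd, hψgddef⟩ : ∃ g : ℕ → H, g = fun n => adjoint B (ψ n) := ⟨_, rfl⟩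
    obtain ⟨V, hVdef⟩ : ∃ V : H →L[ℂ] Ltwo, V = Uψ ∘L B := ⟨_, rfl⟩
    have hVan : IsAnalysisOp ψgd V := by
      intro f n
      calc V f n = (⟪ψ n, B f⟫ : ℂ) := by rw [hVdef]; exact hUψ (B f) n
        _ = ⟪ψgd n, f⟫ := by rw [hψgddef]; exact (adjoint_inner_left B f (ψ n)).symm
    have hinner_gd : ∀ (f : H) (n : ℕ), (⟪ψgd n, f⟫ : ℂ) = ⟪ψ n, B f⟫ := fun f n => by
      rw [hψgddef]; exact adjoint_inner_left B f (ψ n)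
    set b : ℝ := ‖(eB.symm : H →L[ℂ] H)‖ + 1 with hbdef
    have hb0 : (0:ℝ) < b := by positivity
    have hBf_low : ∀ f : H, ‖f‖ ≤ b * ‖B f‖ := by
      intro f
      have h1 : (eB.symm : H →L[ℂ] H) (B f) = f := by rw [hBeq]; exact eB.symm_apply_apply f
      calc ‖f‖ = ‖(eB.symm : H →L[ℂ] H) (B f)‖ := by rw [h1]
        _ ≤ ‖(eB.symm : H →L[ℂ] H)‖ * ‖B f‖ := le_opNorm _ _
        _ ≤ b * ‖B f‖ := by
            have := norm_nonneg (B f); nlinarith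
    have hBf_up : ∀ f : H, ‖B f‖ ≤ (‖B‖ + 1) * ‖f‖ := fun f =>
      le_trans (B.le_opNorm f) (by nlinarith [norm_nonneg f])
    have hFrame : IsFrame ψgd := by
      refine ⟨mψ / b ^ 2, Mψ * (‖B‖ + 1) ^ 2, div_pos hmψ (pow_pos hb0 2), ?_, ?_⟩
      · intro f
        simp only [hinner_gd]
        refine ⟨(hBψ (B f)).1, le_trans (hBψ (B f)).2 ?_⟩
        have h2 : ‖B f‖ ^ 2 ≤ ((‖B‖ + 1) * ‖f‖) ^ 2 :=
          pow_le_pow_left₀ (norm_nonneg _) (hBf_up f) 2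
        rw [mul_pow] at h2
        calc Mψ * ‖B f‖ ^ 2 ≤ Mψ * ((‖B‖ + 1) ^ 2 * ‖f‖ ^ 2) :=
              mul_le_mul_of_nonneg_left h2 hMψ0
          _ = Mψ * (‖B‖ + 1) ^ 2 * ‖f‖ ^ 2 := by ring
      · intro f
        simp only [hinner_gd]
        have h3 := hLψ (B f)
        have h4 : ‖f‖ ^ 2 ≤ b ^ 2 * ‖B f‖ ^ 2 := by
          have := pow_le_pow_left₀ (norm_nonneg f) (hBf_low f) 2
          rw [mul_pow] at this; exact this
        have h5 : mψ / b ^ 2 * ‖f‖ ^ 2 ≤ mψ * ‖B f‖ ^ 2 := by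
          rw [div_mul_eq_mul_div, div_le_iff₀ (pow_pos hb0 2)]
          calc mψ * ‖f‖ ^ 2 ≤ mψ * (b ^ 2 * ‖B f‖ ^ 2) :=
                mul_le_mul_of_nonneg_left h4 hmψ.le
            _ = mψ * ‖B f‖ ^ 2 * b ^ 2 := by ring
        linarith
    have hTV : adjoint Uψ ∘L V = Sφ := by
      ext f
      have h1 : (adjoint Uψ ∘L V) f = Sψ (B f) := by
        simp only [hVdef, hSψdef, comp_apply]
      rw [h1, hSψ_eψ, hBdef]
      simp only [comp_apply, ContinuousLinearEquiv.coe_coe]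
      exact eψ.apply_symm_apply _
    have hUnit : IsUnit (adjoint Uψ ∘L V) := by
      rw [hTV]
      refine ⟨⟨Sφ, (eφ.symm : H →L[ℂ] H), ?_, ?_⟩, rfl⟩
      · ext x
        simp only [ContinuousLinearMap.mul_apply, ContinuousLinearMap.one_apply,
          ContinuousLinearEquiv.coe_coe]
        rw [hSφ_eφ]; exact eφ.apply_symm_apply x
      · ext x
        simp only [ContinuousLinearMap.mul_apply, ContinuousLinearMap.one_apply,
          ContinuousLinearEquiv.coe_coe]
        rw [hSφ_eφ]; exact eφ.symm_apply_apply x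
    refine ⟨1, one_pos, c ^ 2, pow_pos (lt_of_lt_of_le one_pos hc1) 2, fun M' hM' _ => ?_⟩
    have hM'0 : 0 ≤ M' := by
      have h := (hM' f0).2
      have h0 : (0:ℝ) ≤ ∑' n, ‖(⟪φ n - ψ n, f0⟫ : ℂ)‖ ^ 2 := tsum_nonneg (fun n => by positivity)
      nlinarith [pow_pos hf0n 2]
    have hDan : IsAnalysisOp (fun n => φ n - ψ n) (Uφ - Uψ) := by
      intro f n
      have h : ((Uφ - Uψ) f : ∀ _ : ℕ, ℂ) n = Uφ f n - Uψ f n := by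
        rw [ContinuousLinearMap.sub_apply, lp.coeFn_sub]; rfl
      rw [h, hUφ f n, hUψ f n, ← inner_sub_left]
    have hDnorm : ∀ f, ‖(Uφ - Uψ) f‖ ≤ Real.sqrt M' * ‖f‖ := by
      intro f
      have h2 : ‖(Uφ - Uψ) f‖ ^ 2 ≤ M' * ‖f‖ ^ 2 := by
        rw [← (analysis_sum _ _ hDan f).2]; exact (hM' f).2
      calc ‖(Uφ - Uψ) f‖ = Real.sqrt (‖(Uφ - Uψ) f‖ ^ 2) := (Real.sqrt_sq (norm_nonneg _)).symm
        _ ≤ Real.sqrt (M' * ‖f‖ ^ 2) := Real.sqrt_le_sqrt h2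
        _ = Real.sqrt M' * ‖f‖ := by rw [Real.sqrt_mul hM'0, Real.sqrt_sq (norm_nonneg _)]
    have hDop : ‖Uφ - Uψ‖ ≤ Real.sqrt M' := opNorm_le_bound _ (Real.sqrt_nonneg _) hDnorm
    have hSdiff : ∀ f, ‖Sψ f - Sφ f‖ ≤ (‖adjoint Uψ‖ + ‖Uφ‖) * (Real.sqrt M' * ‖f‖) := by
      intro f
      have hadj : adjoint (Uψ - Uφ) = adjoint Uψ - adjoint Uφ := map_sub adjoint Uψ Uφ
      have h1 : Sψ f - Sφ f
          = adjoint Uψ ((Uψ - Uφ) f) + (adjoint (Uψ - Uφ)) (Uφ f) := by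
        rw [hadj]
        simp only [ContinuousLinearMap.sub_apply, map_sub]
        have e1 : Sψ f = adjoint Uψ (Uψ f) := by rw [hSψdef]; rfl
        have e2 : Sφ f = adjoint Uφ (Uφ f) := by rw [hSφdef]; rfl
        rw [e1, e2]; abel
      rw [h1]
      have hb1 : ‖adjoint Uψ ((Uψ - Uφ) f)‖ ≤ ‖adjoint Uψ‖ * (Real.sqrt M' * ‖f‖) := by
        refine le_trans (le_opNorm _ _) (mul_le_mul_of_nonneg_left ?_ (norm_nonneg _))
        have : (Uψ - Uφ) f = -((Uφ - Uψ) f) := by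
          simp only [ContinuousLinearMap.sub_apply, neg_sub]
        rw [this, norm_neg]; exact hDnorm f
      have hb2 : ‖(adjoint (Uψ - Uφ)) (Uφ f)‖ ≤ ‖Uφ‖ * (Real.sqrt M' * ‖f‖) := by
        refine le_trans (le_opNorm _ _) ?_
        have hn : ‖adjoint (Uψ - Uφ)‖ ≤ Real.sqrt M' := by
          rw [LinearIsometryEquiv.norm_map]
          rw [norm_sub_rev]; exact hDop
        have hUf : ‖Uφ f‖ ≤ ‖Uφ‖ * ‖f‖ := le_opNorm _ _
        calc ‖adjoint (Uψ - Uφ)‖ * ‖Uφ f‖ ≤ Real.sqrt M' * (‖Uφ‖ * ‖f‖) := by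
              apply mul_le_mul hn hUf (norm_nonneg _) (Real.sqrt_nonneg _)
          _ = ‖Uφ‖ * (Real.sqrt M' * ‖f‖) := by ring
      calc ‖adjoint Uψ ((Uψ - Uφ) f) + (adjoint (Uψ - Uφ)) (Uφ f)‖
          ≤ ‖adjoint Uψ ((Uψ - Uφ) f)‖ + ‖(adjoint (Uψ - Uφ)) (Uφ f)‖ := norm_add_le _ _
        _ ≤ ‖adjoint Uψ‖ * (Real.sqrt M' * ‖f‖) + ‖Uφ‖ * (Real.sqrt M' * ‖f‖) :=
            add_le_add hb1 hb2
        _ = (‖adjoint Uψ‖ + ‖Uφ‖) * (Real.sqrt M' * ‖f‖) := by ring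
    have h1B : ∀ f : H, ‖f - B f‖ ≤ K1 * ((‖adjoint Uψ‖ + ‖Uφ‖) * (Real.sqrt M' * ‖f‖)) := by
      intro f
      have heq : f - B f = (eψ.symm : H →L[ℂ] H) (Sψ f - Sφ f) := by
        rw [map_sub]
        have h1 : (eψ.symm : H →L[ℂ] H) (Sψ f) = f := by
          simp only [ContinuousLinearEquiv.coe_coe]
          rw [hSψ_eψ]; exact eψ.symm_apply_apply f
        rw [h1, hBdef]
        rfl
      rw [heq]
      exact le_trans (le_opNorm _ _) (mul_le_mul_of_nonneg_left (hSdiff f) (norm_nonneg _))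
    have hWan : IsAnalysisOp (fun n => φ n - ψgd n) (Uφ - V) := by
      intro f n
      have h : ((Uφ - V) f : ∀ _ : ℕ, ℂ) n = Uφ f n - V f n := by
        rw [ContinuousLinearMap.sub_apply, lp.coeFn_sub]; rfl
      
      rw [h, hUφ f n, hVan f n, ← inner_sub_left]
    have hWbound : ∀ f : H, ‖(Uφ - V) f‖ ≤ c * (Real.sqrt M' * ‖f‖) := by
      intro f
      have hdec : (Uφ - V) f = (Uφ - Uψ) f + Uψ (f - B f) := by
        simp only [ContinuousLinearMap.sub_apply, map_sub]
        have hVf : V f = Uψ (B f) := by rw [hVdef]; rfl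
        rw [hVf]; abel
      rw [hdec]
      calc ‖(Uφ - Uψ) f + Uψ (f - B f)‖
          ≤ ‖(Uφ - Uψ) f‖ + ‖Uψ (f - B f)‖ := norm_add_le _ _
        _ ≤ Real.sqrt M' * ‖f‖
            + ‖Uψ‖ * (K1 * ((‖adjoint Uψ‖ + ‖Uφ‖) * (Real.sqrt M' * ‖f‖))) := by
            refine add_le_add (hDnorm f) ?_
            exact le_trans (Uψ.le_opNorm _) (mul_le_mul_of_nonneg_left (h1B f) (norm_nonneg _))
        _ = c * (Real.sqrt M' * ‖f‖) := by rw [hcdef]; ring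
    refine ⟨ψgd, V, hFrame, hVan, hUnit, by rw [hTV, hSφdef], ?_⟩
    intro f
    have hs := analysis_sum _ _ hWan f
    refine ⟨hs.1, ?_⟩
    rw [hs.2]
    calc ‖(Uφ - V) f‖ ^ 2 ≤ (c * (Real.sqrt M' * ‖f‖)) ^ 2 :=
          pow_le_pow_left₀ (norm_nonneg _) (hWbound f) 2
      _ = c ^ 2 * M' * ‖f‖ ^ 2 := by
          rw [mul_pow, mul_pow, Real.sq_sqrt hM'0]; ring
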